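/- Consider the linear ODE system z¹' = ((λ₂-λ₃)/λ₁)·z³, z²' = 0, z³' = ((λ₁-λ₂)/λ₃)·z¹ with constants 0 < λ₁ < λ₂ < λ₃. Then the coefficient matrix has a positive real eigenvalue, and the system admits a solution whose norm grows exponentially in time. -/

import Mathlib

theorem stmt_15 (l1 l2 l3 : ℝ) (h1 : 0 < l1) (h12 : l1 < l2) (h23 : l2 < l3) :
    let M : Matrix (Fin 3) (Fin 3) ℝ :=
      !![0, 0, (l2 - l3)/l1;
         0, 0, 0;
         (l1 - l2)/l3, 0, 0]
    ∃ ν : ℝ, 0 < ν ∧ Module.End.HasEigenvalue (Matrix.toLin' M) ν ∧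
      ∃ z : ℝ → Fin 3 → ℝ,
        (∀ t, HasDerivAt z (M.mulVec (z t)) t) ∧
        ∃ C : ℝ, 0 < C ∧ ∀ t : ℝ, 0 ≤ t → C * Real.exp (ν * t) ≤ ‖z t‖ := by
  intro M
  have hl3 : (0:ℝ) < l3 := h1.trans (h12.trans h23)
  set a : ℝ := (l2 - l3)/l1 with ha
  set b : ℝ := (l1 - l2)/l3 with hb
  have haneg : a < 0 := div_neg_of_neg_of_pos (by linarith) h1
  have hbneg : b < 0 := div_neg_of_neg_of_pos (by linarith) hl3
  have hab : 0 < a * b := mul_pos_of_neg_of_neg haneg hbneg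
  set ν : ℝ := Real.sqrt (a*b) with hν
  have hνpos : 0 < ν := Real.sqrt_pos.mpr hab
  have hν2 : ν * ν = a * b := Real.mul_self_sqrt hab.le
  set v : Fin 3 → ℝ := ![a, 0, ν] with hv
  have hvne : v ≠ 0 := by
    intro h
    have : v 2 = 0 := by rw [h]; rfl
    simp [hv] at this
    exact hνpos.ne' this
  clear_value a b ν v
  have hν2' : ν^2 = (l2 - l3)/l1 * ((l1 - l2)/l3) := by rw [sq, hν2, ha, hb]
  have hmv : M.mulVec v = ν • v := by
    funext i
    fin_cases i
    · simp [M, hv, Matrix.mulVec, dotProduct, Fin.sum_univ_three]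
      linear_combination -ν * ha
    · simp [M, hv, Matrix.mulVec, dotProduct, Fin.sum_univ_three]
    · simp [M, hv, Matrix.mulVec, dotProduct, Fin.sum_univ_three]
      linear_combination -hν2 - a * hb
  refine ⟨ν, hνpos, ?_, ?_⟩
  · exact Module.End.hasEigenvalue_of_hasEigenvector
      ⟨Module.End.mem_eigenspace_iff.mpr (by rw [Matrix.toLin'_apply, hmv]), hvne⟩
  · refine ⟨fun t => Real.exp (ν * t) • v, fun t => ?_, ‖v‖, norm_pos_iff.mpr hvne, fun t _ => ?_⟩
    · have hd : HasDerivAt (fun t : ℝ => Real.exp (ν * t)) (Real.exp (ν * t) * ν) t :=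
        (Real.hasDerivAt_exp (ν * t)).comp t (by simpa using (hasDerivAt_id t).const_mul ν)
      have := hd.smul_const v
      convert this using 1
      all_goals try rfl
      rw [Matrix.mulVec_smul, hmv, smul_smul, mul_comm]
    · rw [norm_smul, Real.norm_eq_abs, abs_of_pos (Real.exp_pos _), mul_comm]
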